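/- For the vertex-reinforced random walk on ℤ and any x ∈ ℤ, the event Υ(x-1) ∩ Υ(x+1) equals almost surely the event {Z_∞(x) < ∞}, i.e., the walk visits x only finitely often if and only if both neighbors x-1 and x+1 are 'seldom-visit' sites. -/

import Mathlib

open MeasureTheory Filter

/-- `Znum X n v ω` is `1` plus the number of visits of the walk `X` to the site
`v` up through time `n` (the quantity `Z_n(v)` of the paper), as a real number. -/
noncomputable def Znum {Ω : Type*} (X : ℕ → Ω → ℤ) (n : ℕ) (v : ℤ) (ω : Ω) : ℝ :=
  1 + ∑ i ∈ Finset.range (n + 1), if X i ω = v then (1 : ℝ) else 0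

/-- `Y_n(x)`: weighted number of visits to `x` up to time `n`. -/
noncomputable def Ynum {Ω : Type*} (X : ℕ → Ω → ℤ) (n : ℕ) (x : ℤ) (ω : Ω) : ℝ :=
  ∑ k ∈ Finset.Icc 1 n,
    (if X (k - 1) ω = x then (1 : ℝ) else 0) /
      (Znum X (k - 1) (x - 1) ω + Znum X (k - 1) (x + 1) ω)

/-- `Y⁺_n(x)`: weighted number of crossings from `x` to `x+1` up to time `n`. -/
noncomputable def Yplus {Ω : Type*} (X : ℕ → Ω → ℤ) (n : ℕ) (x : ℤ) (ω : Ω) : ℝ :=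
  ∑ k ∈ Finset.Icc 1 n,
    (if X (k - 1) ω = x ∧ X k ω = x + 1 then (1 : ℝ) else 0) / Znum X (k - 1) (x + 1) ω

/-- `Y⁻_n(x)`: weighted number of crossings from `x` to `x-1` up to time `n`. -/
noncomputable def Yminus {Ω : Type*} (X : ℕ → Ω → ℤ) (n : ℕ) (x : ℤ) (ω : Ω) : ℝ :=
  ∑ k ∈ Finset.Icc 1 n,
    (if X (k - 1) ω = x ∧ X k ω = x - 1 then (1 : ℝ) else 0) / Znum X (k - 1) (x - 1) ω

/-- The event `Υ(x) = {Y_∞(x) < ∞}` (the sums `Y_n(x)` are nondecreasing in `n`,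
so finiteness of the limit is boundedness). -/
def Upsilon {Ω : Type*} (X : ℕ → Ω → ℤ) (x : ℤ) : Set Ω :=
  {ω | BddAbove (Set.range fun n => Ynum X n x ω)}

/-- The event `Υ⁺(x) = {Y⁺_∞(x) < ∞}`. -/
def UpsilonPlus {Ω : Type*} (X : ℕ → Ω → ℤ) (x : ℤ) : Set Ω :=
  {ω | BddAbove (Set.range fun n => Yplus X n x ω)}

/-- The event `Υ⁻(x) = {Y⁻_∞(x) < ∞}`. -/
def UpsilonMinus {Ω : Type*} (X : ℕ → Ω → ℤ) (x : ℤ) : Set Ω :=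
  {ω | BddAbove (Set.range fun n => Yminus X n x ω)}

/-- `α⁻_n(y) = Z_n(y-1)/(Z_n(y-1) + Z_n(y+1))`. -/
noncomputable def alphaMinus {Ω : Type*} (X : ℕ → Ω → ℤ) (n : ℕ) (y : ℤ) (ω : Ω) : ℝ :=
  Znum X n (y - 1) ω / (Znum X n (y - 1) ω + Znum X n (y + 1) ω)

/-- `(X_n)` is a vertex-reinforced random walk on `ℤ` started at `v0`:
it is adapted, starts at `v0`, a.s. makes nearest-neighbor steps, and the
conditional law of each step is proportional to the augmented occupations of
the two neighbors. -/
structure IsVRRW {Ω : Type*} {m0 : MeasurableSpace Ω} (μ : Measure Ω)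
    (ℱ : Filtration ℕ m0) (X : ℕ → Ω → ℤ) (v0 : ℤ) : Prop where
  adapted : Adapted ℱ X
  init : ∀ ω, X 0 ω = v0
  nearest : ∀ n, ∀ᵐ ω ∂μ, X (n + 1) ω = X n ω + 1 ∨ X (n + 1) ω = X n ω - 1
  step : ∀ n, ∀ᵐ ω ∂μ, ∀ x : ℤ,
    (μ[Set.indicator {ω' | X (n + 1) ω' = x} (fun _ => (1 : ℝ)) | ℱ n]) ω =
      if x = X n ω + 1 ∨ x = X n ω - 1 then
        Znum X n x ω / (Znum X n (X n ω - 1) ω + Znum X n (X n ω + 1) ω)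
      else 0

section Aux

variable {Ω : Type*} {m0 : MeasurableSpace Ω} {μ : Measure Ω} {ℱ : Filtration ℕ m0}
  {X : ℕ → Ω → ℤ} {v0 : ℤ}

noncomputable def Ygen (X : ℕ → Ω → ℤ) (ε : ℤ) (n : ℕ) (y : ℤ) (ω : Ω) : ℝ :=
  ∑ k ∈ Finset.Icc 1 n,
    (if X (k - 1) ω = y ∧ X k ω = y + ε then (1 : ℝ) else 0) / Znum X (k - 1) (y + ε) ω

lemma Ygen_one (n : ℕ) (y : ℤ) (ω : Ω) : Ygen X 1 n y ω = Yplus X n y ω := rfl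

lemma Ygen_neg_one (n : ℕ) (y : ℤ) (ω : Ω) : Ygen X (-1) n y ω = Yminus X n y ω := by
  simp only [Ygen, Yminus, sub_eq_add_neg]

lemma one_le_Znum (X : ℕ → Ω → ℤ) (n : ℕ) (v : ℤ) (ω : Ω) : (1:ℝ) ≤ Znum X n v ω :=
  le_add_of_nonneg_right (Finset.sum_nonneg fun i _ => by split <;> norm_num)

lemma Znum_pos (X : ℕ → Ω → ℤ) (n : ℕ) (v : ℤ) (ω : Ω) : (0:ℝ) < Znum X n v ω :=
  lt_of_lt_of_le one_pos (one_le_Znum X n v ω)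

lemma Znum_succ (n : ℕ) (v : ℤ) (ω : Ω) :
    Znum X (n+1) v ω = Znum X n v ω + (if X (n+1) ω = v then (1:ℝ) else 0) := by
  rw [Znum, Znum, Finset.sum_range_succ]; ring

lemma Ygen_succ (ε : ℤ) (n : ℕ) (y : ℤ) (ω : Ω) :
    Ygen X ε (n+1) y ω = Ygen X ε n y ω +
      (if X n ω = y ∧ X (n+1) ω = y + ε then (1:ℝ) else 0) / Znum X n (y + ε) ω := by
  have := Finset.sum_Icc_succ_top (Nat.succ_le_succ (Nat.zero_le n))
    (fun k => (if X (k - 1) ω = y ∧ X k ω = y + ε then (1 : ℝ) else 0) / Znum X (k - 1) (y + ε) ω)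
  simpa [Ygen] using this

lemma Ynum_succ (n : ℕ) (y : ℤ) (ω : Ω) :
    Ynum X (n+1) y ω = Ynum X n y ω +
      (if X n ω = y then (1:ℝ) else 0) / (Znum X n (y - 1) ω + Znum X n (y + 1) ω) := by
  have := Finset.sum_Icc_succ_top (Nat.succ_le_succ (Nat.zero_le n))
    (fun k => (if X (k - 1) ω = y then (1 : ℝ) else 0) /
      (Znum X (k - 1) (y - 1) ω + Znum X (k - 1) (y + 1) ω))
  simpa [Ynum] using this

lemma ite_div_nonneg {c : Prop} [Decidable c] {d : ℝ} (hd : 0 < d) :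
    0 ≤ (if c then (1:ℝ) else 0) / d := by
  apply div_nonneg _ hd.le; split <;> norm_num

lemma ite_div_le_one {c : Prop} [Decidable c] {d : ℝ} (hd : 1 ≤ d) :
    (if c then (1:ℝ) else 0) / d ≤ 1 := by
  rw [div_le_one (lt_of_lt_of_le one_pos hd)]
  split
  · exact hd
  · linarith

lemma Ygen_nonneg (ε : ℤ) (n : ℕ) (y : ℤ) (ω : Ω) : 0 ≤ Ygen X ε n y ω :=
  Finset.sum_nonneg fun k _ => ite_div_nonneg (Znum_pos X _ _ ω)

lemma Ynum_nonneg (n : ℕ) (y : ℤ) (ω : Ω) : 0 ≤ Ynum X n y ω :=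
  Finset.sum_nonneg fun k _ => ite_div_nonneg
    (by have := Znum_pos X (k-1) (y-1) ω; have := Znum_pos X (k-1) (y+1) ω; linarith)

lemma Ygen_le (ε : ℤ) (n : ℕ) (y : ℤ) (ω : Ω) : Ygen X ε n y ω ≤ n := by
  calc Ygen X ε n y ω ≤ ∑ k ∈ Finset.Icc 1 n, (1:ℝ) :=
        Finset.sum_le_sum fun k _ => ite_div_le_one (one_le_Znum X _ _ ω)
    _ ≤ n := by simp

lemma Ynum_le (n : ℕ) (y : ℤ) (ω : Ω) : Ynum X n y ω ≤ n := by
  calc Ynum X n y ω ≤ ∑ k ∈ Finset.Icc 1 n, (1:ℝ) :=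
        Finset.sum_le_sum fun k _ => ite_div_le_one
          (by have := one_le_Znum X (k-1) (y-1) ω; have := Znum_pos X (k-1) (y+1) ω; linarith)
    _ ≤ n := by simp

lemma bddAbove_range_of_le {f : ℕ → ℝ} (C : ℝ) (h : ∀ n, f n ≤ C) :
    BddAbove (Set.range f) := ⟨C, by rintro z ⟨n, rfl⟩; exact h n⟩

lemma exists_le_of_bddAbove_range {f : ℕ → ℝ} (h : BddAbove (Set.range f)) :
    ∃ C, ∀ n, f n ≤ C := by
  obtain ⟨C, hC⟩ := h
  exact ⟨C, fun n => hC ⟨n, rfl⟩⟩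

/-- Step A: deterministic equivalence given nearest-neighbor path. -/
lemma stepA {ω : Ω}
    (hnear : ∀ n, X (n + 1) ω = X n ω + 1 ∨ X (n + 1) ω = X n ω - 1) (x : ℤ) :
    (BddAbove (Set.range fun n => Yplus X n (x-1) ω) ∧
      BddAbove (Set.range fun n => Yminus X n (x+1) ω)) ↔
      BddAbove (Set.range fun n => Znum X n x ω) := by
  have e1 : x - 1 + 1 = x := by ring
  have e2 : x + 1 - 1 = x := by ring
  constructor
  · rintro ⟨hP, hM⟩
    obtain ⟨C₁, hC₁⟩ := exists_le_of_bddAbove_range hP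
    obtain ⟨C₂, hC₂⟩ := exists_le_of_bddAbove_range hM
    have key : ∀ n, Real.log (Znum X n x ω) ≤ Real.log (Znum X 0 x ω)
        + Yplus X n (x-1) ω + Yminus X n (x+1) ω := by
      intro n
      induction n with
      | zero => simp [Yplus, Yminus]
      | succ n ih =>
        have hZpos := Znum_pos (X := X) n x ω
        have hZsucc := Znum_succ (X := X) n x ω
        have hPsucc := Ygen_succ (X := X) 1 n (x-1) ω
        have hMsucc := Ygen_succ (X := X) (-1) n (x+1) ω
        rw [Ygen_one, Ygen_one] at hPsucc
        rw [Ygen_neg_one, Ygen_neg_one] at hMsucc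
        rw [e1] at hPsucc
        have e3 : x + 1 + -1 = x := by ring
        rw [e3] at hMsucc
        by_cases hx : X (n+1) ω = x
        · have hlog : Real.log (Znum X n x ω + 1) ≤ Real.log (Znum X n x ω) + 1 / Znum X n x ω := by
            have h2 : Real.log ((Znum X n x ω + 1) / Znum X n x ω)
                = Real.log (Znum X n x ω + 1) - Real.log (Znum X n x ω) :=
              Real.log_div (by positivity) (ne_of_gt hZpos)
            have h3 : Real.log ((Znum X n x ω + 1) / Znum X n x ω)
                ≤ (Znum X n x ω + 1) / Znum X n x ω - 1 :=
              Real.log_le_sub_one_of_pos (by positivity)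
            have h4 : (Znum X n x ω + 1) / Znum X n x ω - 1 = 1 / Znum X n x ω := by
              field_simp
              ring
            linarith
          rw [hZsucc, if_pos hx]
          rcases hnear n with hn | hn
          · have hXn : X n ω = x - 1 := by omega
            rw [if_pos ⟨hXn, hx⟩] at hPsucc
            have hMterm : Yminus X n (x+1) ω ≤ Yminus X (n+1) (x+1) ω := by
              rw [hMsucc]
              have := ite_div_nonneg (c := X n ω = x + 1 ∧ X (n+1) ω = x)
                (Znum_pos X n x ω)
              linarith
            rw [hPsucc]
            linarith
          · have hXn : X n ω = x + 1 := by omega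
            rw [if_pos ⟨hXn, hx⟩] at hMsucc
            have hPterm : Yplus X n (x-1) ω ≤ Yplus X (n+1) (x-1) ω := by
              rw [hPsucc]
              have := ite_div_nonneg (c := X n ω = x - 1 ∧ X (n+1) ω = x)
                (Znum_pos X n x ω)
              linarith
            rw [hMsucc]
            linarith
        · rw [hZsucc, if_neg hx, add_zero]
          have h5 := ite_div_nonneg (c := X n ω = x - 1 ∧ X (n+1) ω = x)
            (Znum_pos X n x ω)
          have h6 := ite_div_nonneg (c := X n ω = x + 1 ∧ X (n+1) ω = x)
            (Znum_pos X n x ω)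
          rw [hPsucc, hMsucc]
          linarith
    refine bddAbove_range_of_le (Real.exp (Real.log (Znum X 0 x ω) + C₁ + C₂)) fun n => ?_
    calc Znum X n x ω = Real.exp (Real.log (Znum X n x ω)) :=
          (Real.exp_log (Znum_pos X n x ω)).symm
      _ ≤ Real.exp (Real.log (Znum X 0 x ω) + C₁ + C₂) := by
          apply Real.exp_le_exp.mpr
          have := key n
          have := hC₁ n
          have := hC₂ n
          linarith
  · intro hZ
    obtain ⟨C, hC⟩ := exists_le_of_bddAbove_range hZ
    have hsum : ∀ n : ℕ, ∑ k ∈ Finset.Icc 1 n, (if X k ω = x then (1:ℝ) else 0) ≤ C := by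
      intro n
      have hsub : Finset.Icc 1 n ⊆ Finset.range (n+1) := by
        intro k hk
        rw [Finset.mem_range]
        exact Nat.lt_succ_of_le (Finset.mem_Icc.mp hk).2
      have h1 : ∑ k ∈ Finset.Icc 1 n, (if X k ω = x then (1:ℝ) else 0)
          ≤ ∑ k ∈ Finset.range (n+1), (if X k ω = x then (1:ℝ) else 0) :=
        Finset.sum_le_sum_of_subset_of_nonneg hsub (fun i _ _ => by split <;> norm_num)
      have h2 : (1:ℝ) + ∑ k ∈ Finset.range (n+1), (if X k ω = x then (1:ℝ) else 0)
          = Znum X n x ω := rfl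
      have := hC n
      linarith
    constructor
    · refine bddAbove_range_of_le C fun n => ?_
      refine le_trans (Finset.sum_le_sum fun k _ => ?_) (hsum n)
      rw [e1]
      by_cases hk : X (k-1) ω = x - 1 ∧ X k ω = x
      · rw [if_pos hk, if_pos hk.2, div_le_one (Znum_pos X _ _ ω)]
        exact one_le_Znum X _ _ ω
      · rw [if_neg hk, zero_div]
        split <;> norm_num
    · refine bddAbove_range_of_le C fun n => ?_
      refine le_trans (Finset.sum_le_sum fun k _ => ?_) (hsum n)
      rw [e2]
      by_cases hk : X (k-1) ω = x + 1 ∧ X k ω = x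
      · rw [if_pos hk, if_pos hk.2, div_le_one (Znum_pos X _ _ ω)]
        exact one_le_Znum X _ _ ω
      · rw [if_neg hk, zero_div]
        split <;> norm_num



end Aux

section Mart

open scoped NNReal

variable {Ω : Type*} {m0 : MeasurableSpace Ω} {μ : Measure Ω} {ℱ : Filtration ℕ m0}
  {X : ℕ → Ω → ℤ} {v0 : ℤ}

lemma measurable_X_of_le (hX : Adapted ℱ X) {i n : ℕ} (hin : i ≤ n) :
    Measurable[ℱ n] (X i) := (hX i).mono (ℱ.mono hin) le_rfl

lemma measurableSet_eq_X (hX : Adapted ℱ X) {i n : ℕ} (hin : i ≤ n) (v : ℤ) :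
    MeasurableSet[ℱ n] {ω | X i ω = v} :=
  measurable_X_of_le hX hin (measurableSet_singleton v)

lemma measurable_Znum (hX : Adapted ℱ X) {k n : ℕ} (hkn : k ≤ n) (v : ℤ) :
    Measurable[ℱ n] (Znum X k v) := by
  apply Measurable.add measurable_const
  apply Finset.measurable_sum
  intro i hi
  have hin : i ≤ n := le_trans (Nat.lt_succ_iff.mp (Finset.mem_range.mp hi)) hkn
  exact Measurable.ite (measurableSet_eq_X hX hin v) measurable_const measurable_const

lemma measurable_Ygen (hX : Adapted ℱ X) (ε : ℤ) (n : ℕ) (y : ℤ) :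
    Measurable[ℱ n] (Ygen X ε n y) := by
  apply Finset.measurable_sum
  intro k hk
  have hk2 : k ≤ n := (Finset.mem_Icc.mp hk).2
  have hk1 : k - 1 ≤ n := le_trans (Nat.sub_le k 1) hk2
  apply Measurable.div
  · apply Measurable.ite _ measurable_const measurable_const
    have : {ω | X (k-1) ω = y ∧ X k ω = y + ε}
        = {ω | X (k-1) ω = y} ∩ {ω | X k ω = y + ε} := rfl
    rw [this]
    exact (measurableSet_eq_X hX hk1 y).inter (measurableSet_eq_X hX hk2 (y+ε))
  · exact measurable_Znum hX hk1 (y+ε)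

lemma measurable_Ynum (hX : Adapted ℱ X) (n : ℕ) (y : ℤ) :
    Measurable[ℱ n] (Ynum X n y) := by
  apply Finset.measurable_sum
  intro k hk
  have hk2 : k ≤ n := (Finset.mem_Icc.mp hk).2
  have hk1 : k - 1 ≤ n := le_trans (Nat.sub_le k 1) hk2
  exact (Measurable.ite (measurableSet_eq_X hX hk1 y) measurable_const measurable_const).div
    ((measurable_Znum hX hk1 (y-1)).add (measurable_Znum hX hk1 (y+1)))

lemma ygen_martingale [IsProbabilityMeasure μ] (h : IsVRRW μ ℱ X v0) (y ε : ℤ)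
    (hε : ε = 1 ∨ ε = -1) :
    Martingale (fun n ω => Ygen X ε n y ω - Ynum X n y ω) ℱ μ := by
  have hadp : StronglyAdapted ℱ (fun n ω => Ygen X ε n y ω - Ynum X n y ω) := fun n =>
    ((measurable_Ygen h.adapted ε n y).sub (measurable_Ynum h.adapted n y)).stronglyMeasurable
  have hint : ∀ n, Integrable (fun ω => Ygen X ε n y ω - Ynum X n y ω) μ := by
    intro n
    apply (integrable_const ((n:ℝ) + n)).mono'
    · exact (((measurable_Ygen h.adapted ε n y).le (ℱ.le n)).sub
        ((measurable_Ynum h.adapted n y).le (ℱ.le n))).aestronglyMeasurable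
    · apply ae_of_all _ fun ω => ?_
      rw [Real.norm_eq_abs, abs_sub_le_iff]
      have h1 := Ygen_nonneg (X := X) ε n y ω
      have h2 := Ygen_le (X := X) ε n y ω
      have h3 := Ynum_nonneg (X := X) n y ω
      have h4 := Ynum_le (X := X) n y ω
      constructor <;> linarith
  refine martingale_nat hadp hint fun n => ?_
  set g : Ω → ℝ := fun ω => (if X n ω = y then (1:ℝ) else 0) / Znum X n (y + ε) ω with hgdef
  set I : Ω → ℝ := Set.indicator {ω' | X (n+1) ω' = y + ε} (fun _ => (1:ℝ)) with hIdef
  set D : Ω → ℝ := fun ω =>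
    (if X n ω = y then (1:ℝ) else 0) / (Znum X n (y-1) ω + Znum X n (y+1) ω) with hDdef
  have hgI : ∀ ω, g ω * I ω
      = (if X n ω = y ∧ X (n+1) ω = y + ε then (1:ℝ) else 0) / Znum X n (y+ε) ω := by
    intro ω
    by_cases h1 : X (n+1) ω = y + ε
    · rw [hIdef]
      rw [Set.indicator_of_mem (by exact h1)]
      by_cases h2 : X n ω = y
      · rw [hgdef]; simp only
        rw [if_pos h2, if_pos ⟨h2, h1⟩]; ring
      · rw [hgdef]; simp only
        rw [if_neg h2, if_neg (fun hc => h2 hc.1)]; ring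
    · rw [hIdef]
      rw [Set.indicator_of_notMem (by exact h1), mul_zero,
        if_neg (fun hc => h1 hc.2), zero_div]
  have hsplit : (fun ω => Ygen X ε (n+1) y ω - Ynum X (n+1) y ω)
      = fun ω => (Ygen X ε n y ω - Ynum X n y ω) + (g ω * I ω - D ω) := by
    funext ω
    rw [Ygen_succ, Ynum_succ, hgI ω, hDdef]
    ring
  have hI_int : Integrable I μ := by
    apply (integrable_const (1:ℝ)).indicator
    exact (h.adapted (n+1)).mono (ℱ.le (n+1)) le_rfl (measurableSet_singleton (y+ε))
  have hg_sm : StronglyMeasurable[ℱ n] g :=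
    ((Measurable.ite (measurableSet_eq_X h.adapted le_rfl y) measurable_const
      measurable_const).div (measurable_Znum h.adapted le_rfl (y+ε))).stronglyMeasurable
  have hg_bdd : ∀ᵐ ω ∂μ, ‖g ω‖ ≤ 1 := ae_of_all _ fun ω => by
    rw [Real.norm_eq_abs, abs_of_nonneg (ite_div_nonneg (Znum_pos X n (y+ε) ω))]
    exact ite_div_le_one (one_le_Znum X n (y+ε) ω)
  have hgI_eq : μ[g * I | ℱ n] =ᵐ[μ] g * μ[I | ℱ n] :=
    condExp_stronglyMeasurable_mul_of_bound (ℱ.le n) hg_sm hI_int 1 hg_bdd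
  have hD_sm : StronglyMeasurable[ℱ n] D :=
    ((Measurable.ite (measurableSet_eq_X h.adapted le_rfl y) measurable_const
      measurable_const).div ((measurable_Znum h.adapted le_rfl (y-1)).add
      (measurable_Znum h.adapted le_rfl (y+1)))).stronglyMeasurable
  have hD_int : Integrable D μ := by
    apply (integrable_const (1:ℝ)).mono' ((hD_sm.mono (ℱ.le n)).aestronglyMeasurable)
    apply ae_of_all _ fun ω => ?_
    have hpos : (0:ℝ) < Znum X n (y-1) ω + Znum X n (y+1) ω := by
      have := Znum_pos X n (y-1) ω; have := Znum_pos X n (y+1) ω; linarith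
    rw [Real.norm_eq_abs, abs_of_nonneg (ite_div_nonneg hpos)]
    apply ite_div_le_one
    have := one_le_Znum X n (y-1) ω; have := Znum_pos X n (y+1) ω; linarith
  have hgI_int : Integrable (g * I) μ := by
    apply (integrable_const (1:ℝ)).mono'
    · exact ((hg_sm.mono (ℱ.le n)).aestronglyMeasurable).mul hI_int.aestronglyMeasurable
    · apply ae_of_all _ fun ω => ?_
      rw [Pi.mul_apply, hgI ω, Real.norm_eq_abs,
        abs_of_nonneg (ite_div_nonneg (Znum_pos X n (y+ε) ω))]
      exact ite_div_le_one (one_le_Znum X n (y+ε) ω)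
  have step1 : μ[fun ω => (Ygen X ε n y ω - Ynum X n y ω) + (g ω * I ω - D ω) | ℱ n]
      =ᵐ[μ] μ[fun ω => Ygen X ε n y ω - Ynum X n y ω | ℱ n] + μ[g * I - D | ℱ n] :=
    condExp_add (hint n) (hgI_int.sub hD_int) _
  have step2 : μ[fun ω => Ygen X ε n y ω - Ynum X n y ω | ℱ n]
      = fun ω => Ygen X ε n y ω - Ynum X n y ω :=
    condExp_of_stronglyMeasurable (ℱ.le n) (hadp n) (hint n)
  have step3 : μ[g * I - D | ℱ n] =ᵐ[μ] μ[g * I | ℱ n] - μ[D | ℱ n] :=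
    condExp_sub hgI_int hD_int _
  have step4 : μ[D | ℱ n] = D :=
    condExp_of_stronglyMeasurable (ℱ.le n) hD_sm hD_int
  have step5 : ∀ᵐ ω ∂μ, g ω * (μ[I | ℱ n]) ω = D ω := by
    filter_upwards [h.step n] with ω hω
    have hstep := hω (y + ε)
    rw [hIdef]
    by_cases hXn : X n ω = y
    · have hcond : y + ε = X n ω + 1 ∨ y + ε = X n ω - 1 := by
        rcases hε with rfl | rfl
        · left; rw [hXn]
        · right; rw [hXn]; ring
      rw [hstep, if_pos hcond]
      simp only [hgdef, hDdef]
      rw [if_pos hXn, hXn]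
      have hz := Znum_pos X n (y + ε) ω
      have hz1 := Znum_pos X n (y-1) ω
      have hz2 := Znum_pos X n (y+1) ω
      field_simp
    · simp only [hgdef, hDdef, if_neg hXn, zero_div, zero_mul]
  show (fun ω => Ygen X ε n y ω - Ynum X n y ω)
      =ᵐ[μ] μ[fun ω => Ygen X ε (n+1) y ω - Ynum X (n+1) y ω | ℱ n]
  rw [hsplit]
  calc (fun ω => Ygen X ε n y ω - Ynum X n y ω)
      =ᵐ[μ] fun ω => (Ygen X ε n y ω - Ynum X n y ω) + (g ω * (μ[I | ℱ n]) ω - D ω) := by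
        filter_upwards [step5] with ω h5
        rw [h5]; ring
    _ =ᵐ[μ] μ[fun ω => (Ygen X ε n y ω - Ynum X n y ω) + (g ω * I ω - D ω) | ℱ n] := by
        filter_upwards [step1, step3, hgI_eq] with ω h1 h3 h5
        rw [h1, Pi.add_apply, step2, h3, Pi.sub_apply, h5, step4, Pi.mul_apply]


lemma upsilon_iff_gen [IsProbabilityMeasure μ] (h : IsVRRW μ ℱ X v0) (y ε : ℤ)
    (hε : ε = 1 ∨ ε = -1) :
    ∀ᵐ ω ∂μ, (BddAbove (Set.range fun n => Ynum X n y ω) ↔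
      BddAbove (Set.range fun n => Ygen X ε n y ω)) := by
  have hmart := ygen_martingale h y ε hε
  have hbdd : ∀ᵐ ω ∂μ, ∀ i,
      |(Ygen X ε (i+1) y ω - Ynum X (i+1) y ω) - (Ygen X ε i y ω - Ynum X i y ω)|
        ≤ ((2:ℝ≥0) : ℝ) := by
    apply ae_of_all _ fun ω i => ?_
    rw [Ygen_succ, Ynum_succ]
    have e : (Ygen X ε i y ω + (if X i ω = y ∧ X (i+1) ω = y + ε then (1:ℝ) else 0) /
          Znum X i (y + ε) ω)
        - (Ynum X i y ω + (if X i ω = y then (1:ℝ) else 0) /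
          (Znum X i (y - 1) ω + Znum X i (y + 1) ω))
        - (Ygen X ε i y ω - Ynum X i y ω)
        = (if X i ω = y ∧ X (i+1) ω = y + ε then (1:ℝ) else 0) / Znum X i (y + ε) ω
          - (if X i ω = y then (1:ℝ) else 0) /
            (Znum X i (y - 1) ω + Znum X i (y + 1) ω) := by ring
    rw [e, abs_le]
    have hpos : (0:ℝ) < Znum X i (y-1) ω + Znum X i (y+1) ω := by
      have := Znum_pos X i (y-1) ω; have := Znum_pos X i (y+1) ω; linarith
    have hd1 : (1:ℝ) ≤ Znum X i (y-1) ω + Znum X i (y+1) ω := by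
      have := one_le_Znum X i (y-1) ω; have := Znum_pos X i (y+1) ω; linarith
    have h1 := ite_div_nonneg (c := X i ω = y ∧ X (i+1) ω = y + ε) (Znum_pos X i (y+ε) ω)
    have h2 := ite_div_le_one (c := X i ω = y ∧ X (i+1) ω = y + ε) (one_le_Znum X i (y+ε) ω)
    have h3 := ite_div_nonneg (c := X i ω = y) hpos
    have h4 := ite_div_le_one (c := X i ω = y) hd1
    have : ((2:ℝ≥0) : ℝ) = 2 := by norm_num
    constructor <;> linarith
  filter_upwards [hmart.bddAbove_range_iff_bddBelow_range hbdd] with ω hω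
  constructor
  · intro hY
    obtain ⟨C, hC⟩ := exists_le_of_bddAbove_range hY
    have hbelow : BddBelow (Set.range fun n => Ygen X ε n y ω - Ynum X n y ω) := by
      refine ⟨-C, ?_⟩
      rintro z ⟨n, rfl⟩
      have := Ygen_nonneg (X := X) ε n y ω
      have := hC n
      simp only
      linarith
    have habove := hω.mpr hbelow
    obtain ⟨B, hB⟩ := exists_le_of_bddAbove_range habove
    refine bddAbove_range_of_le (B + C) fun n => ?_
    have := hB n; have := hC n; have := Ynum_nonneg (X := X) n y ω
    linarith
  · intro hG
    obtain ⟨C, hC⟩ := exists_le_of_bddAbove_range hG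
    have habove : BddAbove (Set.range fun n => Ygen X ε n y ω - Ynum X n y ω) := by
      refine bddAbove_range_of_le C fun n => ?_
      have := hC n; have := Ynum_nonneg (X := X) n y ω
      linarith
    have hbelow := hω.mp habove
    obtain ⟨B, hB⟩ := hbelow
    refine bddAbove_range_of_le (C - B) fun n => ?_
    have hBn : B ≤ Ygen X ε n y ω - Ynum X n y ω := hB ⟨n, rfl⟩
    have := hC n
    linarith

end Mart

/-- Lemma 2.2 of Tarrès: almost surely, `Υ(x-1) ∩ Υ(x+1)` coincides with the
event that `x` is visited only finitely often. -/
theorem upsilon_both_neighbors_iff_finitely_visited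
    {Ω : Type*} {m0 : MeasurableSpace Ω} (μ : Measure Ω) [IsProbabilityMeasure μ]
    (ℱ : Filtration ℕ m0) (X : ℕ → Ω → ℤ) (v0 : ℤ) (h : IsVRRW μ ℱ X v0) (x : ℤ) :
    ∀ᵐ ω ∂μ, (ω ∈ Upsilon X (x - 1) ∧ ω ∈ Upsilon X (x + 1)) ↔
      BddAbove (Set.range fun n => Znum X n x ω) := by
  have hnear : ∀ᵐ ω ∂μ, ∀ n, X (n+1) ω = X n ω + 1 ∨ X (n+1) ω = X n ω - 1 :=
    ae_all_iff.mpr h.nearest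
  filter_upwards [hnear, upsilon_iff_gen h (x-1) 1 (Or.inl rfl),
    upsilon_iff_gen h (x+1) (-1) (Or.inr rfl)] with ω hn h1 h2
  simp only [Upsilon, Set.mem_setOf_eq]
  rw [h1, h2]
  have e1 : (fun n => Ygen X 1 n (x-1) ω) = fun n => Yplus X n (x-1) ω :=
    funext fun n => Ygen_one n (x-1) ω
  have e2 : (fun n => Ygen X (-1) n (x+1) ω) = fun n => Yminus X n (x+1) ω :=
    funext fun n => Ygen_neg_one n (x+1) ω
  rw [e1, e2]
  exact stepA hn x
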